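/- Let n ≥ 1 and F : ℝⁿ → ℝⁿ be continuous and decreasing in the monotone-operator sense, i.e., ⟨F(p) − F(q), p − q⟩ ≤ 0 for all p, q ∈ ℝⁿ. Then there exists exactly one p* ∈ ℝⁿ with F(p*) = p*. -/

import Mathlib

open RealInnerProductSpace

set_option maxHeartbeats 1000000
open RealInnerProductSpace Module

lemma exists_zero_of_strongly_monotone :
    ∀ (n : ℕ) (E : Type) [NormedAddCommGroup E] [InnerProductSpace ℝ E]
      [FiniteDimensional ℝ E], finrank ℝ E = n →
      ∀ G : E → E, Continuous G →
        (∀ p q : E, ‖p - q‖ ^ 2 ≤ ⟪G p - G q, p - q⟫) → ∃ p, G p = 0 := by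
  intro n
  induction n with
  | zero =>
    intro E _ _ _ hE G _ _
    have : Subsingleton E := finrank_zero_iff.mp hE
    exact ⟨0, Subsingleton.elim _ _⟩
  | succ m ih =>
    intro E _ _ _ hE G hGc hGm
    haveI : Fact (finrank ℝ E = m + 1) := ⟨hE⟩
    haveI : Nontrivial E := nontrivial_of_finrank_eq_succ hE
    obtain ⟨v₀, hv₀⟩ := exists_ne (0 : E)
    set v : E := ‖v₀‖⁻¹ • v₀ with hvdef
    have hv1 : ‖v‖ = 1 := by
      rw [hvdef, norm_smul, norm_inv, norm_norm, inv_mul_cancel₀ (norm_ne_zero_iff.mpr hv₀)]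
    have hv : v ≠ 0 := by
      intro h; rw [h, norm_zero] at hv1; norm_num at hv1
    set K : Submodule ℝ E := (ℝ ∙ v)ᗮ with hKdef
    haveI : FiniteDimensional ℝ K := inferInstance
    have hKrank : finrank ℝ K = m := Submodule.finrank_orthogonal_span_singleton hv
    set P := K.orthogonalProjection with hPdef
    -- inner product with elements of K is preserved by P
    have hPinner : ∀ (z : E) (w : E), w ∈ K → ⟪(P z : E), w⟫ = ⟪z, w⟫ := by
      intro z w hw
      have h1 : z - P z ∈ Kᗮ := K.sub_starProjection_mem_orthogonal z
      have h2 : ⟪z - (P z : E), w⟫ = 0 := by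
        rw [real_inner_comm]
        exact (Submodule.mem_orthogonal K (z - P z)).mp h1 w hw
      rw [inner_sub_left] at h2
      linarith
    -- for each t, a unique point x ∈ K with P (G (x + t • v)) = 0
    have hex : ∀ t : ℝ, ∃ y : K, P (G ((y : E) + t • v)) = 0 := by
      intro t
      set Gt : K → K := fun y => P (G ((y : E) + t • v)) with hGt
      have hGtc : Continuous Gt := by
        apply (K.orthogonalProjection).continuous.comp
        exact hGc.comp (by continuity)
      have hGtm : ∀ a b : K, ‖a - b‖ ^ 2 ≤ ⟪Gt a - Gt b, a - b⟫ := by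
        intro a b
        have key : ⟪Gt a - Gt b, a - b⟫
            = ⟪G ((a : E) + t • v) - G ((b : E) + t • v), (a : E) - b⟫ := by
          rw [Submodule.coe_inner]
          push_cast
          rw [inner_sub_left, inner_sub_left,
            hPinner _ _ (Submodule.sub_mem K a.2 b.2),
            hPinner _ _ (Submodule.sub_mem K a.2 b.2)]
        rw [key]
        have := hGm ((a : E) + t • v) ((b : E) + t • v)
        simp only [add_sub_add_right_eq_sub] at this
        have hnorm : ‖a - b‖ = ‖(a : E) - b‖ := by
          rw [← Submodule.coe_sub]; rfl
        rw [hnorm]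
        exact this
      exact ih K hKrank Gt hGtc hGtm
    choose x hx using hex
    -- G (x t + t v) lies in span of v
    have hGspan : ∀ t : ℝ, G ((x t : E) + t • v) = ⟪G ((x t : E) + t • v), v⟫ • v := by
      intro t
      have h1 : G ((x t : E) + t • v) ∈ Kᗮ := Submodule.orthogonalProjection_eq_zero_iff.mp (hx t)
      have h1' : G ((x t : E) + t • v) ∈ ℝ ∙ v := by
        rw [← Submodule.orthogonal_orthogonal (ℝ ∙ v)]; exact h1
      obtain ⟨c, hc⟩ := Submodule.mem_span_singleton.mp h1'
      rw [← hc, real_inner_smul_left, real_inner_self_eq_norm_sq, hv1]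
      norm_num
    set g : ℝ → ℝ := fun t => ⟪G ((x t : E) + t • v), v⟫ with hgdef
    -- growth of g
    have hgrow : ∀ s t : ℝ, (t - s) ^ 2 ≤ (g t - g s) * (t - s) := by
      intro s t
      have h := hGm ((x t : E) + t • v) ((x s : E) + s • v)
      rw [hGspan t, hGspan s] at h
      have hsub : ((x t : E) + t • v) - ((x s : E) + s • v)
          = ((x t : E) - x s) + (t - s) • v := by
        rw [sub_smul]; abel
      rw [hsub] at h
      have hvx : ∀ u : K, ⟪v, (u : E)⟫ = 0 := by
        intro u
        have hu : (u : E) ∈ (ℝ ∙ v)ᗮ := u.2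
        rw [Submodule.mem_orthogonal] at hu
        exact hu v (Submodule.mem_span_singleton_self v)
      have hinner : ⟪g t • v - g s • v, ((x t : E) - x s) + (t - s) • v⟫
          = (g t - g s) * (t - s) := by
        have hvv : ⟪v, (x t : E) - (x s : E)⟫ = 0 := by
          have := hvx (x t - x s)
          rwa [Submodule.coe_sub] at this
        simp only [inner_sub_left, inner_add_right, real_inner_smul_left,
          real_inner_smul_right, real_inner_self_eq_norm_sq, hv1, hvv]
        ring
      rw [hinner] at h
      have hnorm : (t - s) ^ 2 ≤ ‖((x t : E) - x s) + (t - s) • v‖ ^ 2 := by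
        have horth : ⟪(x t : E) - x s, (t - s) • v⟫ = 0 := by
          rw [real_inner_smul_right, real_inner_comm]
          have := hvx (x t - x s)
          rw [Submodule.coe_sub] at this
          rw [this]; ring
        rw [norm_add_sq_real, horth]
        have : ‖(t - s) • v‖ ^ 2 = (t - s) ^ 2 := by
          rw [norm_smul, hv1, mul_one, Real.norm_eq_abs, sq_abs]
        nlinarith [norm_nonneg ((x t : E) - x s), sq_nonneg ‖(x t : E) - x s‖]
      linarith
    -- continuity of x (as a map into E) and hence of g
    have hxcont : Continuous fun t => ((x t : E)) := by
      rw [continuous_iff_continuousAt]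
      intro s
      rw [Metric.continuousAt_iff]
      intro ε hε
      have hc : ContinuousAt (fun t => ‖(P (G ((x s : E) + t • v)) : K)‖) s := by
        apply ContinuousAt.norm
        apply (K.orthogonalProjection).continuous.continuousAt.comp
        exact (hGc.comp (continuous_const.add (continuous_id.smul continuous_const))).continuousAt
      have hval : ‖(P (G ((x s : E) + s • v)) : K)‖ = 0 := by rw [hx s, norm_zero]
      rw [Metric.continuousAt_iff] at hc
      obtain ⟨δ, hδ, hcd⟩ := hc ε hε
      refine ⟨δ, hδ, fun {t} ht => ?_⟩
      have hb := hcd ht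
      rw [Real.dist_eq, hval, sub_zero] at hb
      have hb' : ‖(P (G ((x s : E) + t • v)) : K)‖ < ε := lt_of_abs_lt hb
      -- key estimate : ‖x t - x s‖ ≤ ‖P (G (x s + t v))‖
      have key : ‖(x t : E) - x s‖ ≤ ‖(P (G ((x s : E) + t • v)) : K)‖ := by
        rcases eq_or_ne (x t) (x s) with h | h
        · rw [h]; simp
        have hmem : (x t : E) - x s ∈ K := Submodule.sub_mem K (x t).2 (x s).2
        have hm := hGm ((x t : E) + t • v) ((x s : E) + t • v)
        simp only [add_sub_add_right_eq_sub] at hm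
        have hrw : ⟪G ((x t : E) + t • v) - G ((x s : E) + t • v), (x t : E) - x s⟫
            = ⟪-((P (G ((x s : E) + t • v)) : K) : E), (x t : E) - x s⟫ := by
          rw [inner_sub_left, ← hPinner (G ((x t : E) + t • v)) _ hmem,
            ← hPinner (G ((x s : E) + t • v)) _ hmem, hx t]
          simp [inner_neg_left]
        rw [hrw] at hm
        have hcs := real_inner_le_norm (-((P (G ((x s : E) + t • v)) : K) : E)) ((x t : E) - x s)
        rw [norm_neg] at hcs
        have hncoe : ‖((P (G ((x s : E) + t • v)) : K) : E)‖ = ‖(P (G ((x s : E) + t • v)) : K)‖ := rfl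
        rw [hncoe] at hcs
        have hpos : 0 < ‖(x t : E) - x s‖ := by
          rw [norm_pos_iff, sub_ne_zero]
          exact fun hh => h (Subtype.coe_injective hh)
        nlinarith [hm, hcs]
      calc dist ((x t : E)) ((x s : E)) = ‖(x t : E) - x s‖ := dist_eq_norm _ _
        _ ≤ _ := key
        _ < ε := hb'
    have hgcont : Continuous g := by
      apply Continuous.inner
      · exact hGc.comp (hxcont.add (continuous_id.smul continuous_const))
      · exact continuous_const
    -- coercivity from growth
    set T : ℝ := |g 0| + 1 with hT
    have hTpos : 0 < T := by positivity
    have hgT : 0 < g T := by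
      have := hgrow 0 T
      have h2 : T ≤ g T - g 0 := by nlinarith
      have := le_abs_self (g 0)
      nlinarith [neg_abs_le (g 0)]
    have hgmT : g (-T) < 0 := by
      have := hgrow (-T) 0
      have h2 : T ≤ g 0 - g (-T) := by nlinarith
      nlinarith [le_abs_self (g 0), neg_abs_le (g 0)]
    have hmem : (0 : ℝ) ∈ Set.Icc (g (-T)) (g T) := ⟨hgmT.le, hgT.le⟩
    have hsub : Set.Icc (g (-T)) (g T) ⊆ g '' Set.Icc (-T) T := by
      apply intermediate_value_Icc
      · linarith
      · exact hgcont.continuousOn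
    obtain ⟨t₀, _, ht₀⟩ := hsub hmem
    refine ⟨(x t₀ : E) + t₀ • v, ?_⟩
    have h0 : ⟪G ((x t₀ : E) + t₀ • v), v⟫ = (0 : ℝ) := ht₀
    rw [hGspan t₀, h0, zero_smul]


/-- Existence and uniqueness of the equilibrium price in the multi time-period case
(Lemma 1): if `F : ℝⁿ → ℝⁿ` is continuous and decreasing in the monotone-operator sense
(`⟨F p - F q, p - q⟩ ≤ 0` for all `p, q`), then `F` has exactly one fixed point. -/
theorem existsUnique_fixed_point_of_decreasing
    (n : ℕ) (hn : 1 ≤ n)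
    (F : EuclideanSpace ℝ (Fin n) → EuclideanSpace ℝ (Fin n))
    (hcont : Continuous F)
    (hdec : ∀ p q : EuclideanSpace ℝ (Fin n), ⟪F p - F q, p - q⟫ ≤ 0) :
    ∃! pstar : EuclideanSpace ℝ (Fin n), F pstar = pstar := by
  set G : EuclideanSpace ℝ (Fin n) → EuclideanSpace ℝ (Fin n) := fun p => p - F p with hGdef
  have hGc : Continuous G := continuous_id.sub hcont
  have hGm : ∀ p q, ‖p - q‖ ^ 2 ≤ ⟪G p - G q, p - q⟫ := by
    intro p q
    have h1 := hdec p q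
    have h2 : G p - G q = (p - q) - (F p - F q) := by rw [hGdef]; beta_reduce; abel
    rw [h2, inner_sub_left, real_inner_self_eq_norm_sq]
    linarith
  obtain ⟨p, hp⟩ := exists_zero_of_strongly_monotone n (EuclideanSpace ℝ (Fin n))
    finrank_euclideanSpace_fin G hGc hGm
  have hfix : F p = p := by
    have : p - F p = 0 := hp
    rw [sub_eq_zero] at this
    exact this.symm
  refine ⟨p, hfix, fun q hq => ?_⟩
  have h1 := hGm q p
  have h2 : G q = 0 := by rw [hGdef]; simp [hq]
  rw [h2, hp, sub_zero, inner_zero_left] at h1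
  have h3 : ‖q - p‖ = 0 := by nlinarith [norm_nonneg (q - p)]
  rw [norm_eq_zero, sub_eq_zero] at h3
  exact h3
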